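/- Fix μ* > 0 and ε ∈ ℝ, and let δ_G = f(μ*, ε) where f(μ, ε) = Φ(μ/2 - ε/μ) - e^ε Φ(-μ/2 - ε/μ). Define t(β) = f(μ*, ε + ln β) for β ∈ (0, 1]. Then the second derivative of t satisfies t''(β) = φ(μ*/2 - (ε + ln β)/μ*) / (β² μ*), which is strictly positive on (0, 1]; i.e., t is strictly convex on (0, 1]. -/

import Mathlib

noncomputable def stdNormalPDF (x : ℝ) : ℝ :=
  (Real.sqrt (2 * Real.pi))⁻¹ * Real.exp (-x ^ 2 / 2)

noncomputable def stdNormalCDF (x : ℝ) : ℝ := ∫ t in Set.Iic x, stdNormalPDF t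

noncomputable def gaussF (μ ε : ℝ) : ℝ :=
  stdNormalCDF (μ / 2 - ε / μ) - Real.exp ε * stdNormalCDF (-μ / 2 - ε / μ)

lemma continuous_stdNormalPDF : Continuous stdNormalPDF := by
  unfold stdNormalPDF; fun_prop

lemma stdNormalPDF_pos (x : ℝ) : 0 < stdNormalPDF x := by
  unfold stdNormalPDF
  have h : 0 < Real.sqrt (2 * Real.pi) := Real.sqrt_pos.mpr (by positivity)
  positivity

lemma integrable_stdNormalPDF : MeasureTheory.Integrable stdNormalPDF := by
  have h : MeasureTheory.Integrable (fun x : ℝ => Real.exp (-(1/2 : ℝ) * x ^ 2)) :=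
    integrable_exp_neg_mul_sq (by norm_num)
  have h2 := h.const_mul (Real.sqrt (2 * Real.pi))⁻¹
  have heq : (fun x : ℝ => (Real.sqrt (2 * Real.pi))⁻¹ * Real.exp (-(1/2 : ℝ) * x ^ 2))
      = stdNormalPDF := by
    funext x; unfold stdNormalPDF; ring_nf
  rwa [heq] at h2

lemma hasDerivAt_stdNormalCDF (x : ℝ) : HasDerivAt stdNormalCDF (stdNormalPDF x) x := by
  have hint := integrable_stdNormalPDF
  have heq : ∀ y : ℝ, stdNormalCDF y = stdNormalCDF 0 + ∫ t in (0:ℝ)..y, stdNormalPDF t := by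
    intro y
    have := intervalIntegral.integral_Iic_sub_Iic (hint.integrableOn) (hint.integrableOn)
      (a := 0) (b := y)
    unfold stdNormalCDF
    linarith [this]
  have hd : HasDerivAt (fun y => stdNormalCDF 0 + ∫ t in (0:ℝ)..y, stdNormalPDF t)
      (stdNormalPDF x) x := by
    apply HasDerivAt.const_add
    exact intervalIntegral.integral_hasDerivAt_right
      (hint.intervalIntegrable)
      (continuous_stdNormalPDF.stronglyMeasurable.stronglyMeasurableAtFilter)
      continuous_stdNormalPDF.continuousAt
  have : stdNormalCDF = fun y => stdNormalCDF 0 + ∫ t in (0:ℝ)..y, stdNormalPDF t :=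
    funext heq
  rw [this]
  exact hd

lemma pdf_identity (μs ε : ℝ) (hμ : 0 < μs) {b : ℝ} (hb : 0 < b) :
    stdNormalPDF (μs / 2 - (ε + Real.log b) / μs)
      = Real.exp ε * b * stdNormalPDF (-μs / 2 - (ε + Real.log b) / μs) := by
  unfold stdNormalPDF
  nth_rewrite 2 [← Real.exp_log hb]
  set L := Real.log b with hL
  have hexp : -(μs / 2 - (ε + L) / μs) ^ 2 / 2
      = ε + (L + -(-μs / 2 - (ε + L) / μs) ^ 2 / 2) := by
    field_simp
    ring
  rw [hexp, Real.exp_add, Real.exp_add]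
  ring

lemma hasDerivAt_g (μs ε : ℝ) (hμ : 0 < μs) {b : ℝ} (hb : 0 < b) :
    HasDerivAt (fun b => gaussF μs (ε + Real.log b))
      (-(Real.exp ε * stdNormalCDF (-μs / 2 - (ε + Real.log b) / μs))) b := by
  have hlog : HasDerivAt (fun b : ℝ => ε + Real.log b) b⁻¹ b :=
    (Real.hasDerivAt_log hb.ne').const_add ε
  have hu : HasDerivAt (fun b : ℝ => (ε + Real.log b) / μs) (b⁻¹ / μs) b := hlog.div_const μs
  have hA : HasDerivAt (fun b : ℝ => μs / 2 - (ε + Real.log b) / μs) (-(b⁻¹ / μs)) b :=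
    hu.const_sub (μs / 2)
  have hB : HasDerivAt (fun b : ℝ => -μs / 2 - (ε + Real.log b) / μs) (-(b⁻¹ / μs)) b :=
    hu.const_sub (-μs / 2)
  have hΦA : HasDerivAt (fun b : ℝ => stdNormalCDF (μs / 2 - (ε + Real.log b) / μs))
      (stdNormalPDF (μs / 2 - (ε + Real.log b) / μs) * (-(b⁻¹ / μs))) b :=
    (hasDerivAt_stdNormalCDF _).comp b hA
  have hΦB : HasDerivAt (fun b : ℝ => stdNormalCDF (-μs / 2 - (ε + Real.log b) / μs))
      (stdNormalPDF (-μs / 2 - (ε + Real.log b) / μs) * (-(b⁻¹ / μs))) b :=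
    (hasDerivAt_stdNormalCDF _).comp b hB
  have hexp : HasDerivAt (fun b : ℝ => Real.exp (ε + Real.log b))
      (Real.exp (ε + Real.log b) * b⁻¹) b := (Real.hasDerivAt_exp _).comp b hlog
  have hmain := hΦA.sub (hexp.mul hΦB)
  have : (fun b => gaussF μs (ε + Real.log b))
      = fun b : ℝ => stdNormalCDF (μs / 2 - (ε + Real.log b) / μs)
        - Real.exp (ε + Real.log b) * stdNormalCDF (-μs / 2 - (ε + Real.log b) / μs) := rfl
  rw [this]
  convert hmain using 1
  case e'_4 => rfl
  case e'_5 => rfl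
  case e'_8 => rfl
  rw [pdf_identity μs ε hμ hb, Real.exp_add, Real.exp_log hb]
  field_simp
  ring

lemma hasDerivAt_g' (μs ε : ℝ) (hμ : 0 < μs) {b : ℝ} (hb : 0 < b) :
    HasDerivAt (fun b : ℝ => -(Real.exp ε * stdNormalCDF (-μs / 2 - (ε + Real.log b) / μs)))
      (stdNormalPDF (μs / 2 - (ε + Real.log b) / μs) / (b ^ 2 * μs)) b := by
  have hlog : HasDerivAt (fun b : ℝ => ε + Real.log b) b⁻¹ b :=
    (Real.hasDerivAt_log hb.ne').const_add ε
  have hu : HasDerivAt (fun b : ℝ => (ε + Real.log b) / μs) (b⁻¹ / μs) b := hlog.div_const μs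
  have hB : HasDerivAt (fun b : ℝ => -μs / 2 - (ε + Real.log b) / μs) (-(b⁻¹ / μs)) b :=
    hu.const_sub (-μs / 2)
  have hΦB : HasDerivAt (fun b : ℝ => stdNormalCDF (-μs / 2 - (ε + Real.log b) / μs))
      (stdNormalPDF (-μs / 2 - (ε + Real.log b) / μs) * (-(b⁻¹ / μs))) b :=
    (hasDerivAt_stdNormalCDF _).comp b hB
  have hmain := (hΦB.const_mul (Real.exp ε)).neg
  convert hmain using 1
  case e'_4 => rfl
  case e'_5 => rfl
  case e'_8 => rfl
  rw [pdf_identity μs ε hμ hb]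
  field_simp

lemma deriv_deriv_g (μs ε : ℝ) (hμ : 0 < μs) {β : ℝ} (hβ : 0 < β) :
    deriv (deriv (fun b => gaussF μs (ε + Real.log b))) β
      = stdNormalPDF (μs / 2 - (ε + Real.log β) / μs) / (β ^ 2 * μs) := by
  have hEq : deriv (fun b => gaussF μs (ε + Real.log b))
      =ᶠ[nhds β] fun b : ℝ => -(Real.exp ε * stdNormalCDF (-μs / 2 - (ε + Real.log b) / μs)) := by
    filter_upwards [isOpen_Ioi.mem_nhds (show β ∈ Set.Ioi (0:ℝ) from hβ)] with b hb
    exact (hasDerivAt_g μs ε hμ hb).deriv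
  rw [hEq.deriv_eq]
  exact (hasDerivAt_g' μs ε hμ hβ).deriv

theorem gaussF_log_strictConvex (μs ε : ℝ) (hμ : 0 < μs) :
    (∀ β ∈ Set.Ioc (0 : ℝ) 1,
      deriv (deriv (fun b => gaussF μs (ε + Real.log b))) β
          = stdNormalPDF (μs / 2 - (ε + Real.log β) / μs) / (β ^ 2 * μs) ∧
      0 < stdNormalPDF (μs / 2 - (ε + Real.log β) / μs) / (β ^ 2 * μs)) ∧
    StrictConvexOn ℝ (Set.Ioc (0 : ℝ) 1) (fun b => gaussF μs (ε + Real.log b)) := by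
  constructor
  · intro β hβ
    refine ⟨deriv_deriv_g μs ε hμ hβ.1, ?_⟩
    have := stdNormalPDF_pos (μs / 2 - (ε + Real.log β) / μs)
    have hβ2 : 0 < β ^ 2 * μs := mul_pos (pow_pos hβ.1 2) hμ
    exact div_pos this hβ2
  · apply strictConvexOn_of_deriv2_pos (convex_Ioc 0 1)
    · intro x hx
      exact (hasDerivAt_g μs ε hμ hx.1).continuousAt.continuousWithinAt
    · intro x hx
      rw [interior_Ioc] at hx
      simp only [Function.iterate_succ, Function.iterate_zero, Function.comp_apply, id_eq]
      rw [deriv_deriv_g μs ε hμ hx.1]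
      have := stdNormalPDF_pos (μs / 2 - (ε + Real.log x) / μs)
      exact div_pos this (mul_pos (pow_pos hx.1 2) hμ)
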